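/- If m = o(√n), then b(G_{m,n}) = (1 + o(1))√n; more precisely, ⌈√n⌉ ≤ b(G_{m,n}) ≤ ⌈√n⌉ + ⌈m/2⌉. -/

import Mathlib

open SimpleGraph

/-- The set of vertices burned after `t` rounds of the burning process on `G`,
where `s i` is the source of fire chosen in round `i + 1`. -/
def burnSet {V : Type*} (G : SimpleGraph V) (s : ℕ → V) : ℕ → Set V
  | 0 => ∅
  | t + 1 => burnSet G s t ∪ {w | ∃ u ∈ burnSet G s t, G.Adj u w} ∪ {s t}

/-- The partial burning number `b(G, S)`: the least number of rounds needed to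
burn every vertex of `S`. -/
noncomputable def pburn {V : Type*} (G : SimpleGraph V) (S : Set V) : ℕ :=
  sInf {r | ∃ s : ℕ → V, S ⊆ burnSet G s r}

/-- The burning number `b(G)`. -/
noncomputable def burn {V : Type*} (G : SimpleGraph V) : ℕ :=
  pburn G Set.univ

/-- The ball of radius `t` around `v` in graph distance. -/
def gball {V : Type*} (G : SimpleGraph V) (v : V) (t : ℕ) : Set V :=
  {w | G.dist v w ≤ t}

/-- The `m × n` Cartesian grid `P_m □ P_n`; the first coordinate is the height (row). -/
def gridGraph (m n : ℕ) : SimpleGraph (Fin m × Fin n) :=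
  (pathGraph m) □ (pathGraph n)



section Core
variable {V : Type*} {G : SimpleGraph V} {s : ℕ → V}

lemma burnSet_subset_succ (t : ℕ) : burnSet G s t ⊆ burnSet G s (t+1) := by
  intro w hw; exact Or.inl (Or.inl hw)

lemma burnSet_mono {t t' : ℕ} (h : t ≤ t') : burnSet G s t ⊆ burnSet G s t' := by
  induction t' with
  | zero => simp_all
  | succ k ih =>
    rcases Nat.lt_or_ge t (k+1) with h' | h'
    · exact (ih (by omega)).trans (burnSet_subset_succ k)
    · have : t = k + 1 := by omega
      subst this; exact subset_rfl

lemma source_mem_burnSet (t : ℕ) : s t ∈ burnSet G s (t+1) := Or.inr rfl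

lemma adj_mem_burnSet {u w : V} {t : ℕ} (hu : u ∈ burnSet G s t) (h : G.Adj u w) :
    w ∈ burnSet G s (t+1) := Or.inl (Or.inr ⟨u, hu, h⟩)

lemma walk_mem_burnSet {u w : V} {t : ℕ} (hu : u ∈ burnSet G s t) (p : G.Walk u w) :
    w ∈ burnSet G s (t + p.length) := by
  induction p generalizing t with
  | nil => simpa using hu
  | cons h q ih =>
    have := ih (adj_mem_burnSet hu h)
    simpa [Nat.add_assoc, Nat.add_comm 1] using this

lemma mem_burnSet_exists {r : ℕ} : ∀ {w : V}, w ∈ burnSet G s r →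
    ∃ t, ∃ p : G.Walk (s t) w, t + 1 + p.length ≤ r := by
  induction r with
  | zero => intro w hw; simp [burnSet] at hw
  | succ k ih =>
    intro w hw
    rcases hw with (hw | ⟨u, hu, hadj⟩) | hw
    · obtain ⟨t, p, hp⟩ := ih hw
      exact ⟨t, p, by omega⟩
    · obtain ⟨t, p, hp⟩ := ih hu
      exact ⟨t, p.concat hadj, by simp [Walk.length_concat]; omega⟩
    · rw [Set.mem_singleton_iff] at hw
      subst hw
      exact ⟨k, Walk.nil, by simp⟩

end Core

section Grid

lemma pathGraph_walk_aux (n : ℕ) : ∀ d : ℕ, ∀ i j : Fin n, Nat.dist i.val j.val = d →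
    ∃ p : (pathGraph n).Walk i j, p.length = d := by
  intro d
  induction d with
  | zero =>
    intro i j h
    have : i = j := Fin.ext (Nat.eq_of_dist_eq_zero h)
    subst this; exact ⟨Walk.nil, rfl⟩
  | succ k ih =>
    intro i j h
    rcases Nat.lt_or_ge i.val j.val with hij | hij
    · have hlt : i.val + 1 < n := by have := j.isLt; omega
      set i' : Fin n := ⟨i.val + 1, hlt⟩ with hi'
      have hadj : (pathGraph n).Adj i i' := pathGraph_adj.mpr (Or.inl rfl)
      have hd : Nat.dist i'.val j.val = k := by
        show Nat.dist (i.val + 1) j.val = k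
        simp [Nat.dist] at h ⊢; omega
      obtain ⟨p, hp⟩ := ih i' j hd
      exact ⟨Walk.cons hadj p, by simp [hp]⟩
    · have hji : j.val < i.val := by
        rcases Nat.lt_or_ge j.val i.val with h' | h'
        · exact h'
        · have : i.val = j.val := le_antisymm h' hij
          simp [Nat.dist, this] at h
      have hpos : 0 < i.val := by omega
      set i' : Fin n := ⟨i.val - 1, by have := i.isLt; omega⟩ with hi'
      have hadj : (pathGraph n).Adj i i' := pathGraph_adj.mpr (Or.inr (by simp [hi']; omega))
      have hd : Nat.dist i'.val j.val = k := by
        show Nat.dist (i.val - 1) j.val = k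
        simp [Nat.dist] at h ⊢; omega
      obtain ⟨p, hp⟩ := ih i' j hd
      exact ⟨Walk.cons hadj p, by simp [hp]⟩

lemma pathGraph_walk {n : ℕ} (i j : Fin n) :
    ∃ p : (pathGraph n).Walk i j, p.length = Nat.dist i.val j.val :=
  pathGraph_walk_aux n _ i j rfl

lemma grid_walk_exists {m n : ℕ} (a b : Fin m × Fin n) :
    ∃ p : (gridGraph m n).Walk a b,
      p.length = Nat.dist a.1.val b.1.val + Nat.dist a.2.val b.2.val := by
  obtain ⟨p₁, hp₁⟩ := pathGraph_walk a.1 b.1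
  obtain ⟨p₂, hp₂⟩ := pathGraph_walk a.2 b.2
  refine ⟨((p₁.boxProdLeft (pathGraph n) a.2).append (p₂.boxProdRight (pathGraph m) b.1)), ?_⟩
  simp [Walk.length_append, Walk.boxProdLeft, Walk.boxProdRight, Walk.length_map, hp₁, hp₂]
  erw [Walk.length_append, Walk.length_map, Walk.length_map, hp₁, hp₂]

lemma grid_walk_col_bound {m n : ℕ} {a b : Fin m × Fin n}
    (p : (gridGraph m n).Walk a b) : Nat.dist a.2.val b.2.val ≤ p.length := by
  induction p with
  | nil => simp [Nat.dist]
  | @cons u v w hadj q ih =>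
    have hstep : Nat.dist u.2.val v.2.val ≤ 1 := by
      rcases (boxProd_adj.mp hadj) with ⟨_, h2⟩ | ⟨h2, _⟩
      · rw [h2]; simp [Nat.dist]
      · rcases pathGraph_adj.mp h2 with h | h <;> simp [Nat.dist] <;> omega
    calc Nat.dist u.2.val w.2.val ≤ Nat.dist u.2.val v.2.val + Nat.dist v.2.val w.2.val :=
          Nat.dist.triangle_inequality _ _ _
      _ ≤ 1 + q.length := by have := ih; omega
      _ = (Walk.cons hadj q).length := by simp [Nat.add_comm]

end Grid

lemma sum_odd (r : ℕ) : ∑ t ∈ Finset.range r, (2*t+1) = r*r := by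
  induction r with
  | zero => simp
  | succ k ih => rw [Finset.sum_range_succ, ih]; ring

lemma grid_lower {m n r : ℕ} (hm : 1 ≤ m) {s : ℕ → Fin m × Fin n}
    (h : Set.univ ⊆ burnSet (gridGraph m n) s r) : n ≤ r * r := by
  classical
  set I : ℕ → Finset ℕ := fun t =>
    Finset.Icc ((s t).2.val - (r-1-t)) ((s t).2.val + (r-1-t)) with hI
  have hcov : ∀ y : Fin n, y.val ∈ (Finset.range r).biUnion I := by
    intro y
    have hmem : ((⟨0, hm⟩ : Fin m), y) ∈ burnSet (gridGraph m n) s r := h (Set.mem_univ _)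
    obtain ⟨t, p, hp⟩ := mem_burnSet_exists hmem
    have hcol := grid_walk_col_bound p
    refine Finset.mem_biUnion.mpr ⟨t, Finset.mem_range.mpr (by omega), ?_⟩
    simp only [hI, Finset.mem_Icc]
    simp [Nat.dist] at hcol
    omega
  have hcard : n ≤ ((Finset.range r).biUnion I).card := by
    have := Finset.card_le_card_of_injOn (f := fun y : Fin n => y.val)
      (s := (Finset.univ : Finset (Fin n))) (t := (Finset.range r).biUnion I)
      (fun y _ => hcov y) (fun y _ y' _ hyy => Fin.ext hyy)
    simpa using this
  calc n ≤ ((Finset.range r).biUnion I).card := hcard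
    _ ≤ ∑ t ∈ Finset.range r, (I t).card := Finset.card_biUnion_le
    _ ≤ ∑ t ∈ Finset.range r, (2*(r-1-t)+1) := by
        refine Finset.sum_le_sum fun t _ => ?_
        rw [hI, Nat.card_Icc]
        omega
    _ = ∑ t ∈ Finset.range r, (2*t+1) := by
        have := Finset.sum_range_reflect (fun t => 2*t+1) r
        simpa using this
    _ = r * r := sum_odd r

lemma grid_upper {m n r : ℕ} (hm : 1 ≤ m) (hn : 1 ≤ n) (hr : 1 ≤ r) (hnr : n ≤ r * r) :
    ∃ s : ℕ → Fin m × Fin n, Set.univ ⊆ burnSet (gridGraph m n) s (r + (m+1)/2) := by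
  have hrow : (m-1)/2 < m := by omega
  have hcolok : ∀ c : ℕ, min c (n-1) < n := fun c => by omega
  set a : ℕ → ℕ := fun i => i * (2*r - i) with ha
  refine ⟨fun i => (⟨(m-1)/2, hrow⟩, ⟨min (a i + (r-1-i)) (n-1), hcolok _⟩), ?_⟩
  rintro ⟨x, y⟩ -
  set i := Nat.findGreatest (fun i => a i ≤ y.val) (r-1) with hidef
  have hile : i ≤ r - 1 := Nat.findGreatest_le _
  have hai : a i ≤ y.val :=
    Nat.findGreatest_spec (P := fun i => a i ≤ y.val) (Nat.zero_le (r-1)) (by simp [ha])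
  set k := r - 1 - i with hk
  have hrik : r = i + k + 1 := by omega
  have hstep : a (i+1) = a i + 2*k + 1 := by
    have h2 : 2*r - (i+1) = i + 2*k + 1 := by omega
    have h3 : 2*r - i = i + 2*k + 2 := by omega
    simp only [ha, h2, h3]
    ring
  have hlt : y.val < a i + 2*k + 1 := by
    rw [← hstep]
    rcases Nat.lt_or_ge i (r-1) with h' | h'
    · by_contra hc
      push_neg at hc
      exact Nat.findGreatest_is_greatest (P := fun i => a i ≤ y.val)
        (Nat.lt_succ_self _) (by omega) hc
    · have hieq : i + 1 = r := by omega
      have h4 : 2*r - r = r := by omega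
      have : a (i+1) = r * r := by rw [hieq]; show r * (2*r-r) = r*r; rw [h4]
      rw [this]
      have := y.isLt
      omega
  -- the source for round i
  have hcd : Nat.dist (min (a i + k) (n-1)) y.val ≤ k := by
    have hy := y.isLt
    simp [Nat.dist]
    omega
  have hrd : Nat.dist ((m-1)/2) x.val ≤ (m+1)/2 := by
    have hx := x.isLt
    simp [Nat.dist]
    omega
  obtain ⟨p, hp⟩ := grid_walk_exists
    ((⟨(m-1)/2, hrow⟩, ⟨min (a i + (r-1-i)) (n-1), hcolok _⟩) : Fin m × Fin n) (x, y)
  have hmem := walk_mem_burnSet (G := gridGraph m n)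
    (s := fun i => (⟨(m-1)/2, hrow⟩, ⟨min (a i + (r-1-i)) (n-1), hcolok _⟩))
    (source_mem_burnSet i) p
  refine burnSet_mono ?_ hmem
  have hplen : p.length ≤ (m+1)/2 + k := by
    rw [hp]
    have h1 : Nat.dist (min (a i + (r-1-i)) (n-1)) y.val ≤ k := by rw [← hk] at *; exact hcd
    simp only []
    omega
  omega

lemma burn_le_of_strategy {V : Type*} (G : SimpleGraph V) {r : ℕ} {s : ℕ → V}
    (h : Set.univ ⊆ burnSet G s r) : burn G ≤ r :=
  Nat.sInf_le ⟨s, h⟩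

/-- If `m = o(√n)` then `b(G_{m,n}) = (1 + o(1))√n`; more precisely,
`⌈√n⌉ ≤ b(G_{m,n}) ≤ ⌈√n⌉ + ⌈m/2⌉`. -/
theorem burn_grid_small_m (m : ℕ → ℕ) (hm1 : ∀ n, 1 ≤ m n)
    (hm : Asymptotics.IsLittleO Filter.atTop (fun n : ℕ => (m n : ℝ)) (fun n : ℕ => Real.sqrt n)) :
    (∀ n : ℕ, 1 ≤ n →
        ⌈Real.sqrt n⌉₊ ≤ burn (gridGraph (m n) n) ∧
          burn (gridGraph (m n) n) ≤ ⌈Real.sqrt n⌉₊ + (m n + 1) / 2) ∧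
      Asymptotics.IsEquivalent Filter.atTop
        (fun n : ℕ => (burn (gridGraph (m n) n) : ℝ)) (fun n : ℕ => Real.sqrt n) := by
  have key : ∀ n : ℕ, 1 ≤ n →
      ⌈Real.sqrt n⌉₊ ≤ burn (gridGraph (m n) n) ∧
        burn (gridGraph (m n) n) ≤ ⌈Real.sqrt n⌉₊ + (m n + 1) / 2 := by
    intro n hn
    set r := ⌈Real.sqrt n⌉₊ with hrdef
    have hs1 : (1:ℝ) ≤ Real.sqrt n := by
      rw [show (1:ℝ) = Real.sqrt 1 by simp]
      exact Real.sqrt_le_sqrt (by exact_mod_cast hn)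
    have hr1 : 1 ≤ r := Nat.one_le_ceil_iff.mpr (by linarith)
    have hnr : n ≤ r * r := by
      have h1 : Real.sqrt n ≤ (r:ℝ) := Nat.le_ceil _
      have h2 : (n:ℝ) ≤ (r:ℝ) * (r:ℝ) := by
        have := Real.sq_sqrt (show (0:ℝ) ≤ n by positivity)
        nlinarith [Real.sqrt_nonneg (n:ℝ)]
      exact_mod_cast h2
    obtain ⟨s, hs⟩ := grid_upper (hm1 n) hn hr1 hnr
    have hub : burn (gridGraph (m n) n) ≤ r + (m n + 1) / 2 := burn_le_of_strategy _ hs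
    refine ⟨?_, hub⟩
    -- lower bound
    have hne : {r | ∃ s : ℕ → Fin (m n) × Fin n,
        Set.univ ⊆ burnSet (gridGraph (m n) n) s r}.Nonempty := ⟨_, s, hs⟩
    obtain ⟨s', hs'⟩ := Nat.sInf_mem hne
    have hlow : n ≤ burn (gridGraph (m n) n) * burn (gridGraph (m n) n) :=
      grid_lower (hm1 n) hs'
    set B := burn (gridGraph (m n) n) with hB
    have : Real.sqrt n ≤ (B:ℝ) := by
      have h1 : (n:ℝ) ≤ (B:ℝ) * (B:ℝ) := by exact_mod_cast hlow
      calc Real.sqrt n ≤ Real.sqrt ((B:ℝ) * (B:ℝ)) := Real.sqrt_le_sqrt h1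
        _ = (B:ℝ) := Real.sqrt_mul_self (by positivity)
    exact Nat.ceil_le.mpr this
  refine ⟨key, ?_⟩
  -- asymptotic equivalence
  rw [Asymptotics.IsEquivalent]
  have hsqrt_top : Filter.Tendsto (fun n : ℕ => Real.sqrt n) Filter.atTop Filter.atTop := by
    rw [Filter.tendsto_atTop]
    intro b
    filter_upwards [Filter.eventually_ge_atTop ⌈b^2⌉₊] with n hn
    rcases le_or_gt b 0 with hb | hb
    · exact hb.trans (Real.sqrt_nonneg _)
    · have hbn : b^2 ≤ (n:ℝ) := le_trans (Nat.le_ceil _) (by exact_mod_cast hn)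
      calc b = Real.sqrt (b^2) := (Real.sqrt_sq hb.le).symm
        _ ≤ Real.sqrt n := Real.sqrt_le_sqrt hbn
  have hbigO : (fun n : ℕ => (burn (gridGraph (m n) n) : ℝ) - Real.sqrt n) =O[Filter.atTop]
      (fun n : ℕ => (m n : ℝ) + 1) := by
    rw [Asymptotics.isBigO_iff]
    refine ⟨1, ?_⟩
    filter_upwards [Filter.eventually_ge_atTop 1] with n hn
    obtain ⟨hlo, hhi⟩ := key n hn
    set B := burn (gridGraph (m n) n) with hB
    have h1 : Real.sqrt n ≤ (B:ℝ) := le_trans (Nat.le_ceil _) (by exact_mod_cast hlo)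
    have h2 : (B:ℝ) ≤ Real.sqrt n + ((m n : ℝ) + 1) := by
      have hc : (B:ℝ) ≤ (⌈Real.sqrt n⌉₊ : ℝ) + (((m n + 1) / 2 : ℕ) : ℝ) := by
        exact_mod_cast hhi
      have hc2 : (⌈Real.sqrt n⌉₊ : ℝ) < Real.sqrt n + 1 :=
        Nat.ceil_lt_add_one (Real.sqrt_nonneg _)
      have hc3 : (((m n + 1) / 2 : ℕ) : ℝ) ≤ (m n : ℝ) := by
        have : (m n + 1) / 2 ≤ m n := by have := hm1 n; omega
        exact_mod_cast this
      linarith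
    have hmn : (0:ℝ) ≤ (m n : ℝ) := by positivity
    rw [Real.norm_eq_abs, Real.norm_eq_abs, abs_of_nonneg (by linarith), abs_of_nonneg (by linarith)]
    linarith
  have hlit : (fun n : ℕ => (m n : ℝ) + 1) =o[Filter.atTop] (fun n : ℕ => Real.sqrt n) := by
    refine hm.add ?_
    rw [Asymptotics.isLittleO_const_left]
    refine Or.inr ?_
    have hcomp : (norm ∘ fun n : ℕ => Real.sqrt n) = fun n : ℕ => Real.sqrt n := by
      funext n; simp [Function.comp, Real.norm_eq_abs, abs_of_nonneg (Real.sqrt_nonneg _)]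
    rw [hcomp]; exact hsqrt_top
  exact (hbigO.trans_isLittleO hlit).congr_left (by intro n; simp [Pi.sub_apply])
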